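/- Let K be a field of characteristic coprime to n, and let α be a root of the irreducible polynomial f(z) = z^n + s·z + t over K with n ≥ 3. Then the traces of powers of α in the field extension K(α)/K satisfy Tr(α^i) = 0 for i = 1, ..., n−2 and Tr(α^{n-1}) = −(n−1)·s. -/

import Mathlib

open Polynomial

/-- Let `K` be a field with characteristic coprime to `n`, and `α` a root of the
irreducible polynomial `f(z) = z^n + s·z + t` (n ≥ 3) generating the field extension
`L = K(α)`. Then `Tr_{L/K}(α^i) = 0` for `i = 1, ..., n−2` and
`Tr_{L/K}(α^{n-1}) = −(n−1)·s`. -/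
theorem trace_powers_of_bring_jerrard_root
    (K L : Type*) [Field K] [Field L] [Algebra K L]
    (n : ℕ) (hn : 3 ≤ n) (hchar : (n : K) ≠ 0) (s t : K)
    (hirr : Irreducible (X ^ n + C s * X + C t : K[X]))
    (α : L) (hroot : Polynomial.aeval α (X ^ n + C s * X + C t : K[X]) = 0)
    (hgen : Algebra.adjoin K {α} = ⊤) :
    (∀ i : ℕ, 1 ≤ i → i ≤ n - 2 → Algebra.trace K L (α ^ i) = 0) ∧
      Algebra.trace K L (α ^ (n - 1)) = -((n : K) - 1) * s := by
  have hn0 : 0 < n := by omega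
  have hmonic : (X ^ n + C s * X + C t : K[X]).Monic := by
    monicity!
    rw [if_pos (by omega), if_neg (by omega)]
    simp
  have hdeg : (X ^ n + C s * X + C t : K[X]).natDegree = n := by
    compute_degree!
    rw [if_neg (by omega), if_neg (by omega)]
    simp
  have hmin : minpoly K α = X ^ n + C s * X + C t :=
    (minpoly.eq_of_irreducible_of_monic hirr hroot hmonic).symm
  have hint : IsIntegral K α := ⟨_, hmonic, hroot⟩
  let pb : PowerBasis K L :=
    (Algebra.adjoin.powerBasis hint).map <|
      (Subalgebra.equivOfEq _ _ hgen).trans Subalgebra.topEquiv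
  have hpbgen : pb.gen = α := rfl
  have hdim : pb.dim = n := by
    show (Algebra.adjoin.powerBasis hint).dim = n
    rw [Algebra.adjoin.powerBasis_dim, hmin, hdeg]
  have hbasis : ∀ j : Fin pb.dim, pb.basis j = α ^ (j : ℕ) := fun j => by
    rw [pb.basis_eq_pow, hpbgen]
  have hrepr_lt : ∀ (k : ℕ), k < n → ∀ j : Fin pb.dim,
      pb.basis.repr (α ^ k) j = if (j : ℕ) = k then 1 else 0 := by
    intro k hk j
    have hk' : k < pb.dim := hdim ▸ hk
    have : α ^ k = pb.basis ⟨k, hk'⟩ := (hbasis ⟨k, hk'⟩).symm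
    rw [this, pb.basis.repr_self, Finsupp.single_apply]
    simp [Fin.ext_iff, eq_comm]
  have hpow : α ^ n = -(algebraMap K L s * α) - algebraMap K L t := by
    have h := hroot
    simp only [map_add, map_mul, aeval_X_pow, aeval_C, aeval_X] at h
    linear_combination h
  have key : ∀ (k : ℕ), k ≤ 2 * n - 2 → ∀ j : Fin pb.dim,
      pb.basis.repr (α ^ k) j =
        if k < n then (if (j : ℕ) = k then 1 else 0)
        else (-s) * (if (j : ℕ) = k - n + 1 then 1 else 0)
          + (-t) * (if (j : ℕ) = k - n then 1 else 0) := by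
    intro k hk j
    by_cases hkn : k < n
    · rw [if_pos hkn, hrepr_lt k hkn]
    · rw [if_neg hkn]
      have h1 : k - n < n := by omega
      have h2 : k - n + 1 < n := by omega
      have hxk : α ^ k = (-s) • α ^ (k - n + 1) + (-t) • α ^ (k - n) := by
        calc α ^ k = α ^ (k - n) * α ^ n := by
              rw [← pow_add]; congr 1; omega
          _ = (-s) • α ^ (k - n + 1) + (-t) • α ^ (k - n) := by
              rw [hpow, Algebra.smul_def, Algebra.smul_def, map_neg, map_neg]; ring
      rw [hxk, map_add, map_smul, map_smul, Finsupp.add_apply, Finsupp.smul_apply,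
        Finsupp.smul_apply, hrepr_lt _ h2, hrepr_lt _ h1, smul_eq_mul, smul_eq_mul]
  have htr : ∀ i : ℕ, Algebra.trace K L (α ^ i)
      = ∑ j : Fin pb.dim, pb.basis.repr (α ^ (i + (j : ℕ))) j := by
    intro i
    rw [Algebra.trace_eq_matrix_trace pb.basis, Matrix.trace]
    refine Finset.sum_congr rfl fun j _ => ?_
    rw [Matrix.diag_apply, Algebra.leftMulMatrix_eq_repr_mul, hbasis, ← pow_add]
  constructor
  · intro i h1 h2
    rw [htr]
    apply Finset.sum_eq_zero
    intro j _
    have hj : (j : ℕ) < n := hdim ▸ j.isLt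
    rw [key (i + j) (by omega)]
    split_ifs with hc1 hc2 <;> first
      | omega
      | simp
  · rw [htr]
    haveI : NeZero pb.dim := ⟨by omega⟩
    have hval : ∀ j : Fin pb.dim,
        pb.basis.repr (α ^ (n - 1 + (j : ℕ))) j = -s + (if j = 0 then s else 0) := by
      intro j
      have hj : (j : ℕ) < n := hdim ▸ j.isLt
      rw [key (n - 1 + j) (by omega)]
      by_cases hj0 : (j : ℕ) = 0
      · have hj0' : j = 0 := by ext; simpa using hj0
        rw [if_pos (by omega), if_neg (by omega), if_pos hj0']
        ring
      · have hj0' : ¬ j = 0 := by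
          exact fun h => hj0 (by rw [h, Fin.val_zero])
        rw [if_neg (by omega), if_pos (by omega), if_neg (by omega), if_neg hj0']
        ring
    rw [Finset.sum_congr rfl fun j _ => hval j, Finset.sum_add_distrib,
      Finset.sum_const, Finset.sum_ite_eq' Finset.univ (0 : Fin pb.dim) (fun _ => s)]
    simp only [Finset.mem_univ, if_pos, Finset.card_univ, Fintype.card_fin, hdim,
      nsmul_eq_mul]
    ring
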